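/- For integers a ≥ b ≥ 1, the real number β defined as the unique real root greater than 1 of x^3 − a x^2 − b x − 1 is a Pisot number: it is an algebraic integer greater than 1 all of whose Galois conjugates have complex modulus strictly less than 1. -/

import Mathlib

open Polynomial in
theorem beta_aux_integral (a b : ℤ) (β : ℝ)
    (hroot : β ^ 3 - (a : ℝ) * β ^ 2 - (b : ℝ) * β - 1 = 0) :
    IsIntegral ℤ β := by
  refine ⟨X^3 - C a * X^2 - C b * X - 1, by monicity!, ?_⟩
  rw [← Polynomial.aeval_def]
  simp only [map_sub, map_mul, map_pow, map_one, aeval_X, aeval_C, algebraMap_int_eq,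
    eq_intCast, map_intCast]
  exact hroot

/-- The dominant root β of x³ - ax² - bx - 1 (a ≥ b ≥ 1) is a Pisot number:
an algebraic integer greater than 1 whose Galois conjugates (the other complex
roots of its minimal polynomial, the cubic) have modulus < 1. -/
theorem beta_is_pisot (a b : ℤ) (hb : 1 ≤ b) (hab : b ≤ a)
    (β : ℝ) (hβ1 : 1 < β)
    (hroot : β ^ 3 - (a : ℝ) * β ^ 2 - (b : ℝ) * β - 1 = 0) :
    IsIntegral ℤ β ∧ 1 < β ∧
      ∀ z : ℂ, z ^ 3 - (a : ℂ) * z ^ 2 - (b : ℂ) * z - 1 = 0 → z ≠ (β : ℂ) →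
        ‖z‖ < 1 := by
  have hβ0 : (0:ℝ) < β := lt_trans one_pos hβ1
  have ha : (1:ℤ) ≤ a := le_trans hb hab
  have haR : (1:ℝ) ≤ (a:ℝ) := by exact_mod_cast ha
  have hbR : (1:ℝ) ≤ (b:ℝ) := by exact_mod_cast hb
  have habR : (b:ℝ) ≤ (a:ℝ) := by exact_mod_cast hab
  have hd : β * (β^2 - (a:ℝ)*β - b) = 1 := by linear_combination hroot
  have hd0 : 0 < β^2 - (a:ℝ)*β - b := by nlinarith
  have hd1 : β^2 - (a:ℝ)*β - b < 1 := by nlinarith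
  have hq1 : 0 < 1 + (β - a) + (β^2 - (a:ℝ)*β - b) := by
    have key : (1 - β) * (1 + (β - a) + (β^2 - (a:ℝ)*β - b)) = -((a:ℝ) + b) := by
      linear_combination (-1:ℝ) * hroot
    nlinarith
  have hqm1 : 0 < 1 - (β - a) + (β^2 - (a:ℝ)*β - b) := by
    have key : (-1 - β) * (1 - (β - a) + (β^2 - (a:ℝ)*β - b)) = (b:ℝ) - a - 2 := by
      linear_combination (-1:ℝ) * hroot
    nlinarith
  refine ⟨beta_aux_integral a b β hroot, hβ1, ?_⟩
  intro z hz hne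
  have hβC : (β:ℂ)^3 - (a:ℂ)*(β:ℂ)^2 - (b:ℂ)*(β:ℂ) - 1 = 0 := by
    exact_mod_cast congrArg (Complex.ofReal) hroot
  have hf : (z - (β:ℂ)) * (z^2 + ((β:ℂ) - a)*z + ((β:ℂ)^2 - (a:ℂ)*(β:ℂ) - b)) = 0 := by
    linear_combination hz - hβC
  have hq : z^2 + ((β:ℂ) - a)*z + ((β:ℂ)^2 - (a:ℂ)*(β:ℂ) - b) = 0 := by
    rcases mul_eq_zero.mp hf with h | h
    · exact absurd (sub_eq_zero.mp h) hne
    · exact h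
  have hqc : (starRingEnd ℂ z)^2 + ((β:ℂ) - a)*(starRingEnd ℂ z)
      + ((β:ℂ)^2 - (a:ℂ)*(β:ℂ) - b) = 0 := by
    have := congrArg (starRingEnd ℂ) hq
    simpa [map_add, map_mul, map_pow, Complex.conj_ofReal] using this
  by_cases hre : (starRingEnd ℂ) z = z
  · -- z is real
    have hzre : z = ((z.re : ℝ) : ℂ) := (Complex.conj_eq_iff_re.mp hre).symm
    set x : ℝ := z.re with hx_def
    have hxq : x^2 + (β - a)*x + (β^2 - (a:ℝ)*β - b) = 0 := by
      have : ((x^2 + (β - a)*x + (β^2 - (a:ℝ)*β - b) : ℝ) : ℂ) = 0 := by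
        push_cast; rw [← hzre]; exact hq
      exact_mod_cast this
    have hxx' : x * (-(β - (a:ℝ)) - x) = β^2 - (a:ℝ)*β - b := by nlinarith [hxq]
    have hp1 : (1 - x) * (1 - (-(β - (a:ℝ)) - x)) > 0 := by nlinarith [hq1]
    have hpm1 : (1 + x) * (1 + (-(β - (a:ℝ)) - x)) > 0 := by nlinarith [hqm1]
    have hxlt : |x| < 1 := by
      rw [abs_lt]
      constructor
      · by_contra h; push_neg at h; nlinarith
      · by_contra h; push_neg at h; nlinarith
    calc ‖z‖ = |x| := by rw [hzre]; exact Complex.norm_real x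
      _ < 1 := hxlt
  · -- z is not real; conj z is the other root of the quadratic
    have hsum : starRingEnd ℂ z + z = -((β:ℂ) - a) := by
      have hdiff : ((starRingEnd ℂ) z - z) * ((starRingEnd ℂ) z + z + ((β:ℂ) - a)) = 0 := by
        linear_combination hqc - hq
      rcases mul_eq_zero.mp hdiff with h | h
      · exact absurd (sub_eq_zero.mp h) hre
      · linear_combination h
    have hprod : z * starRingEnd ℂ z = ((β:ℂ)^2 - (a:ℂ)*(β:ℂ) - b) := by
      have hcz : starRingEnd ℂ z = -((β:ℂ) - a) - z := by linear_combination hsum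
      rw [hcz]; linear_combination -hq
    have hns : (Complex.normSq z : ℝ) = β^2 - (a:ℝ)*β - b := by
      have hmc := Complex.mul_conj z
      rw [hmc] at hprod
      exact_mod_cast hprod
    have h2 : (‖z‖)^2 = β^2 - (a:ℝ)*β - b := by rw [Complex.sq_norm]; exact hns
    nlinarith [norm_nonneg z]
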